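/- Consider one inner loop of SARAH (SARAH-IN) with each f_i L-smooth and learning rate η satisfying 0 < η ≤ 2 / ( L ( sqrt(1 + (4m/b)·((n−b)/(n−1))) + 1 ) ). Then Σ_{t=0}^{m} E[||∇P(w_t) − v_t||²] − (1 − Lη) Σ_{t=0}^{m} E[||v_t||²] ≤ 0. -/

import Mathlib

open scoped BigOperators

set_option maxHeartbeats 1000000

noncomputable section

/-- Vectors in `ℝ^d`. -/
abbrev Vec (d : ℕ) := EuclideanSpace ℝ (Fin d)

/-- The type of mini-batches of size `b` from `{1,…,n}` (modeled as `Fin n`). -/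
def Batch (n b : ℕ) : Type := {s : Finset (Fin n) // s.card = b}

instance (n b : ℕ) : Fintype (Batch n b) :=
  inferInstanceAs (Fintype {s : Finset (Fin n) // s.card = b})

/-- Expectation (uniform average) over a finite sample space. -/
def expec {Ω : Type*} [Fintype Ω] (F : Ω → ℝ) : ℝ :=
  (Fintype.card Ω : ℝ)⁻¹ * ∑ ω, F ω

/-- The SARAH-IN state `(w_t, v_t)` given a starting point `w0`, a learning rate `η`,
a batch size `b` and a sequence of mini-batches `I` (where `I t` is the batch used to
form `v_t`, for `t ≥ 1`). -/
def sarahState {d n : ℕ} (f : Fin n → Vec d → ℝ) (w0 : Vec d) (η : ℝ) (b : ℕ)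
    (I : ℕ → Finset (Fin n)) : ℕ → Vec d × Vec d
  | 0 => (w0, (n : ℝ)⁻¹ • ∑ i, gradient (f i) w0)
  | t + 1 =>
    let p := sarahState f w0 η b I t
    let w' := p.1 - η • p.2
    (w', (b : ℝ)⁻¹ • ∑ i ∈ I (t + 1), (gradient (f i) w' - gradient (f i) p.1) + p.2)

/-- Extend a finite sequence of mini-batches to all of `ℕ` (indices `≥ T` are irrelevant). -/
def pad {n b T : ℕ} (ω : Fin T → Batch n b) : ℕ → Finset (Fin n) :=
  fun t => if h : t < T then (ω ⟨t, h⟩).1 else ∅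

section aux0
open Finset
open Finset

variable {n b : ℕ}

lemma card_filter_perm (σ : Equiv.Perm (Fin n)) (p : Finset (Fin n) → Prop) [DecidablePred p]
    (q : Finset (Fin n) → Prop) [DecidablePred q]
    (h : ∀ s, p s ↔ q (s.map σ.toEmbedding)) :
    ((powersetCard b (univ : Finset (Fin n))).filter p).card
      = ((powersetCard b (univ : Finset (Fin n))).filter q).card := by
  apply Finset.card_nbij' (fun s => s.map σ.toEmbedding) (fun s => s.map σ.symm.toEmbedding)
  · intro s hs
    simp only [mem_coe, mem_filter, mem_powersetCard_univ] at hs ⊢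
    exact ⟨by simp [hs.1], (h s).1 hs.2⟩
  · intro s hs
    simp only [mem_coe, mem_filter, mem_powersetCard_univ] at hs ⊢
    refine ⟨by simp [hs.1], ?_⟩
    rw [h]
    convert hs.2 using 2
    ext x; simp
  · intro s _; ext x; simp
  · intro s _; ext x; simp

lemma c1_const (i i' : Fin n) :
    ((powersetCard b (univ : Finset (Fin n))).filter (fun s => i ∈ s)).card
      = ((powersetCard b (univ : Finset (Fin n))).filter (fun s => i' ∈ s)).card := by
  apply card_filter_perm (Equiv.swap i i')
  intro s
  simp [Finset.mem_map_equiv, Equiv.symm_swap, Equiv.swap_apply_right]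

lemma c2_const (i j i' j' : Fin n) (hij : i ≠ j) (hij' : i' ≠ j') :
    ((powersetCard b (univ : Finset (Fin n))).filter (fun s => i ∈ s ∧ j ∈ s)).card
      = ((powersetCard b (univ : Finset (Fin n))).filter (fun s => i' ∈ s ∧ j' ∈ s)).card := by
  set σ₁ := Equiv.swap i i'
  set σ₂ := Equiv.swap (σ₁ j) j'
  have hσ₁i : σ₁ i = i' := Equiv.swap_apply_left i i'
  have h1 : σ₁ j ≠ i' := by
    rw [← hσ₁i]; exact fun h => hij (σ₁.injective h).symm
  have hπi : σ₂ (σ₁ i) = i' := by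
    rw [hσ₁i]
    exact Equiv.swap_apply_of_ne_of_ne (Ne.symm h1) hij'
  have hπj : σ₂ (σ₁ j) = j' := Equiv.swap_apply_left _ _
  apply card_filter_perm (σ₁.trans σ₂)
  intro s
  simp only [Finset.mem_map_equiv]
  constructor
  · rintro ⟨h1, h2⟩
    constructor
    · show (σ₁.trans σ₂).symm i' ∈ s
      have : (σ₁.trans σ₂) i = i' := hπi
      rw [← this, Equiv.symm_apply_apply]; exact h1
    · show (σ₁.trans σ₂).symm j' ∈ s
      have : (σ₁.trans σ₂) j = j' := hπj
      rw [← this, Equiv.symm_apply_apply]; exact h2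
  · rintro ⟨h1, h2⟩
    have e1 : (σ₁.trans σ₂).symm i' = i := by
      have : (σ₁.trans σ₂) i = i' := hπi
      rw [← this, Equiv.symm_apply_apply]
    have e2 : (σ₁.trans σ₂).symm j' = j := by
      have : (σ₁.trans σ₂) j = j' := hπj
      rw [← this, Equiv.symm_apply_apply]
    exact ⟨e1 ▸ h1, e2 ▸ h2⟩

-- swap sums
lemma sum_P_sum_mem {M : Type*} [AddCommMonoid M] (g : Fin n → M) :
    ∑ s ∈ powersetCard b (univ : Finset (Fin n)), ∑ i ∈ s, g i
      = ∑ i, (((powersetCard b (univ : Finset (Fin n))).filter (fun s => i ∈ s)).card) • g i := by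
  have : ∀ s ∈ powersetCard b (univ : Finset (Fin n)), ∑ i ∈ s, g i
      = ∑ i : Fin n, if i ∈ s then g i else 0 := by
    intro s _
    rw [Finset.sum_ite_mem, Finset.univ_inter]
  rw [Finset.sum_congr rfl this, Finset.sum_comm]
  refine Finset.sum_congr rfl fun i _ => ?_
  rw [Finset.sum_ite, Finset.sum_const_zero, add_zero, Finset.sum_const]

lemma sum_P_sum_offDiag {M : Type*} [AddCommMonoid M] (g : Fin n → Fin n → M) :
    ∑ s ∈ powersetCard b (univ : Finset (Fin n)), ∑ p ∈ s.offDiag, g p.1 p.2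
      = ∑ p ∈ (univ : Finset (Fin n)).offDiag,
          (((powersetCard b (univ : Finset (Fin n))).filter
            (fun s => p.1 ∈ s ∧ p.2 ∈ s)).card) • g p.1 p.2 := by
  have : ∀ s ∈ powersetCard b (univ : Finset (Fin n)), ∑ p ∈ s.offDiag, g p.1 p.2
      = ∑ p ∈ (univ : Finset (Fin n)).offDiag, if p.1 ∈ s ∧ p.2 ∈ s then g p.1 p.2 else 0 := by
    intro s _
    rw [Finset.sum_ite, Finset.sum_const_zero, add_zero]
    apply Finset.sum_congr _ (fun _ _ => rfl)
    ext p
    simp only [mem_filter, mem_offDiag, mem_univ, true_and]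
    tauto
  rw [Finset.sum_congr rfl this, Finset.sum_comm]
  refine Finset.sum_congr rfl fun p _ => ?_
  rw [Finset.sum_ite, Finset.sum_const_zero, add_zero, Finset.sum_const]

lemma arith_var (n b N c1 c2 Q T : ℝ) (hn : 2 ≤ n) (hb : 1 ≤ b) (hbn : b ≤ n)
    (hN : 0 < N) (h1 : n * c1 = b * N) (h2 : (n*n - n) * c2 = (b*b - b) * N)
    (hQ : 0 ≤ Q) (hT : 0 ≤ T) :
    N⁻¹ * ((c1 * Q + c2 * (T - Q)) / b^2 - N * T / n^2)
      ≤ (n - b)/(b*(n-1)) * (n⁻¹ * Q) := by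
  have hb0 : (0:ℝ) < b := by linarith
  have hn0 : (0:ℝ) < n := by linarith
  have hn1 : (0:ℝ) < n - 1 := by linarith
  have hnn : n*n - n ≠ 0 := by nlinarith
  have hc1 : c1 = b * N / n := by field_simp; linarith
  have hc2 : c2 = (b*b - b) * N / (n*n - n) := by
    rw [eq_div_iff hnn]; linarith
  subst hc1; subst hc2
  have key : (n - b)/(b*(n-1)) * (n⁻¹ * Q)
      - N⁻¹ * (((b * N / n) * Q + ((b*b - b) * N / (n*n - n)) * (T - Q)) / b^2 - N * T / n^2)
      = (n-b) * T / (b*n^2*(n-1)) := by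
    field_simp
    ring
  nlinarith [div_nonneg (mul_nonneg (by linarith : (0:ℝ) ≤ n - b) hT) (by positivity : (0:ℝ) ≤ b*n^2*(n-1))]

lemma arith_le_one (K x : ℝ) (hK : 0 ≤ K) (hx : 0 < x)
    (hcond : x * (Real.sqrt (1 + K) + 1) ≤ 2) : 0 ≤ 1 - x := by
  have hRsq : (Real.sqrt (1 + K))^2 = 1 + K := Real.sq_sqrt (by linarith)
  have hR0 : 0 ≤ Real.sqrt (1 + K) := Real.sqrt_nonneg _
  have hR1 : 1 ≤ Real.sqrt (1 + K) := by nlinarith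
  nlinarith

lemma arith_eta (K x : ℝ) (hK : 0 ≤ K) (hx : 0 < x)
    (hcond : x * (Real.sqrt (1 + K) + 1) ≤ 2) :
    K / 4 * x^2 ≤ 1 - x := by
  set R := Real.sqrt (1 + K) with hR
  have hRsq : R^2 = 1 + K := Real.sq_sqrt (by linarith)
  have hR1 : 1 ≤ R := by nlinarith [Real.sqrt_nonneg (1+K)]
  nlinarith [mul_le_mul_of_nonneg_left hcond (mul_nonneg (sub_nonneg.2 hR1) hx.le)]

end aux0
section core
open Finset
variable {E : Type*} [NormedAddCommGroup E] [InnerProductSpace ℝ E]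
variable {n b : ℕ}

local notation "⟪" x ", " y "⟫" => @inner ℝ _ _ x y

lemma norm_sum_sq_expand (a : Fin n → E) (s : Finset (Fin n)) :
    ‖∑ i ∈ s, a i‖^2
      = (∑ p ∈ s.offDiag, ⟪a p.1, a p.2⟫) + ∑ i ∈ s, ‖a i‖^2 := by
  rw [← real_inner_self_eq_norm_sq, sum_inner]
  simp_rw [inner_sum]
  rw [← Finset.sum_product', ← Finset.diag_union_offDiag s,
    Finset.sum_union (Finset.disjoint_diag_offDiag s), Finset.sum_diag, add_comm]
  simp_rw [real_inner_self_eq_norm_sq]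

/-- The key averaging bound over batches. -/
lemma batch_avg_bound (hn : 2 ≤ n) (hb : 1 ≤ b) (hbn : b ≤ n) (X : E) (a : Fin n → E) :
    ((powersetCard b (univ : Finset (Fin n))).card : ℝ)⁻¹ *
      ∑ s ∈ powersetCard b (univ : Finset (Fin n)),
        ‖X + ((n:ℝ)⁻¹ • ∑ i, a i - (b:ℝ)⁻¹ • ∑ i ∈ s, a i)‖^2
    ≤ ‖X‖^2 + ((n:ℝ) - b)/((b:ℝ)*((n:ℝ)-1)) * ((n:ℝ)⁻¹ * ∑ i, ‖a i‖^2) := by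
  have hn2 : (2:ℕ) ≤ n := hn
  set P : Finset (Finset (Fin n)) := powersetCard b (univ : Finset (Fin n)) with hP
  set N : ℕ := P.card with hN
  have hNpos : 0 < N := by
    rw [hN, hP, Finset.card_powersetCard, Finset.card_univ, Fintype.card_fin]
    exact Nat.choose_pos hbn
  -- representatives
  obtain ⟨i0, j0, h01⟩ : ∃ i j : Fin n, i ≠ j :=
    ⟨⟨0, by omega⟩, ⟨1, by omega⟩, by simp [Fin.ext_iff]⟩
  set c1 : ℕ := (P.filter (fun s => i0 ∈ s)).card with hc1
  set c2 : ℕ := (P.filter (fun s => i0 ∈ s ∧ j0 ∈ s)).card with hc2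
  -- double counting identities
  have fact1 : (n : ℕ) * c1 = b * N := by
    have e1 : ∑ s ∈ P, ∑ i ∈ s, (1:ℕ) = ∑ i : Fin n, (P.filter (fun s => i ∈ s)).card • 1 :=
      sum_P_sum_mem _
    simp only [smul_eq_mul, mul_one, Finset.sum_const, smul_eq_mul] at e1
    have e2 : ∀ s ∈ P, s.card = b := fun s hs => (mem_powersetCard_univ.mp hs)
    have e3 : ∑ s ∈ P, s.card = b * N := by
      rw [Finset.sum_congr rfl e2, Finset.sum_const, smul_eq_mul, mul_comm]
    have e4 : ∑ i : Fin n, (P.filter (fun s => i ∈ s)).card = n * c1 := by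
      rw [Finset.sum_congr rfl (fun i _ => c1_const i i0), Finset.sum_const,
        Finset.card_univ, Fintype.card_fin, smul_eq_mul]
    calc n * c1 = ∑ i : Fin n, (P.filter (fun s => i ∈ s)).card := e4.symm
    _ = ∑ s ∈ P, s.card := by
        rw [← e1]
    _ = b * N := e3
  have fact2 : (n*n - n : ℕ) * c2 = (b*b - b) * N := by
    have e1 : ∑ s ∈ P, ∑ p ∈ s.offDiag, (1:ℕ)
        = ∑ p ∈ (univ : Finset (Fin n)).offDiag,
            ((P.filter (fun s => p.1 ∈ s ∧ p.2 ∈ s)).card) • 1 :=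
      sum_P_sum_offDiag (fun _ _ => 1)
    simp only [smul_eq_mul, mul_one, Finset.sum_const, smul_eq_mul] at e1
    have e2 : ∀ s ∈ P, s.offDiag.card = b*b - b := by
      intro s hs
      rw [Finset.offDiag_card, mem_powersetCard_univ.mp hs]
    have e3 : ∑ s ∈ P, s.offDiag.card = (b*b - b) * N := by
      rw [Finset.sum_congr rfl e2, Finset.sum_const, smul_eq_mul, mul_comm]
    have e4 : ∑ p ∈ (univ : Finset (Fin n)).offDiag,
        ((P.filter (fun s => p.1 ∈ s ∧ p.2 ∈ s)).card) = (n*n - n) * c2 := by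
      have hconst : ∀ p ∈ (univ : Finset (Fin n)).offDiag,
          ((P.filter (fun s => p.1 ∈ s ∧ p.2 ∈ s)).card) = c2 := by
        intro p hp
        rw [Finset.mem_offDiag] at hp
        exact c2_const p.1 p.2 i0 j0 hp.2.2 h01
      rw [Finset.sum_congr rfl hconst, Finset.sum_const, Finset.offDiag_card,
        Finset.card_univ, Fintype.card_fin, smul_eq_mul]
    calc (n*n - n) * c2 = _ := e4.symm
    _ = ∑ s ∈ P, s.offDiag.card := by
        rw [← e1]
    _ = (b*b - b) * N := e3
  -- sums of vectors and squares
  have sumvec : ∑ s ∈ P, ∑ i ∈ s, a i = c1 • ∑ i, a i := by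
    rw [sum_P_sum_mem a, Finset.sum_congr rfl (fun i _ => by rw [c1_const i i0]),
      ← Finset.smul_sum]
  set Q : ℝ := ∑ i, ‖a i‖^2 with hQ
  set T : ℝ := ‖∑ i, a i‖^2 with hT
  have hQ0 : 0 ≤ Q := Finset.sum_nonneg fun i _ => sq_nonneg _
  have hT0 : 0 ≤ T := sq_nonneg _
  have offdiag_univ : ∑ p ∈ (univ : Finset (Fin n)).offDiag, ⟪a p.1, a p.2⟫ = T - Q := by
    have := norm_sum_sq_expand a (univ : Finset (Fin n))
    rw [hT, hQ]; linarith [this]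
  have sumsq : ∑ s ∈ P, ‖∑ i ∈ s, a i‖^2 = (c1:ℝ) * Q + (c2:ℝ) * (T - Q) := by
    calc ∑ s ∈ P, ‖∑ i ∈ s, a i‖^2
        = ∑ s ∈ P, ((∑ p ∈ s.offDiag, ⟪a p.1, a p.2⟫) + ∑ i ∈ s, ‖a i‖^2) :=
          Finset.sum_congr rfl fun s _ => norm_sum_sq_expand a s
      _ = (∑ s ∈ P, ∑ p ∈ s.offDiag, ⟪a p.1, a p.2⟫) + ∑ s ∈ P, ∑ i ∈ s, ‖a i‖^2 :=
          Finset.sum_add_distrib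
      _ = (c2:ℝ) * (T - Q) + (c1:ℝ) * Q := by
          rw [sum_P_sum_offDiag (fun i j => ⟪a i, a j⟫), sum_P_sum_mem (fun i => ‖a i‖^2)]
          have hconst2 : ∀ p ∈ (univ : Finset (Fin n)).offDiag,
              ((P.filter (fun s => p.1 ∈ s ∧ p.2 ∈ s)).card) • ⟪a p.1, a p.2⟫
                = c2 • ⟪a p.1, a p.2⟫ := by
            intro p hp
            rw [Finset.mem_offDiag] at hp
            rw [c2_const p.1 p.2 i0 j0 hp.2.2 h01]
          have hconst1 : ∀ i ∈ (univ : Finset (Fin n)),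
              ((P.filter (fun s => i ∈ s)).card) • ‖a i‖^2 = c1 • ‖a i‖^2 := by
            intro i _
            rw [c1_const i i0]
          congr 1
          · rw [Finset.sum_congr rfl hconst2, ← Finset.smul_sum, offdiag_univ, nsmul_eq_mul]
          · rw [Finset.sum_congr rfl hconst1, ← Finset.smul_sum, nsmul_eq_mul, hQ]
      _ = (c1:ℝ) * Q + (c2:ℝ) * (T - Q) := by ring
  -- scalar abbreviations
  set SA : E := ∑ i, a i with hSA
  set W : ℝ := ⟪X, SA⟫ with hW
  have hb0 : ((b:ℝ)) ≠ 0 := by positivity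
  have hn0 : ((n:ℝ)) ≠ 0 := by
    have : (0:ℕ) < n := by omega
    positivity
  have hN0 : ((N:ℝ)) ≠ 0 := by positivity
  -- cast counting facts
  have f1R : (n:ℝ) * (c1:ℝ) = (b:ℝ) * (N:ℝ) := by exact_mod_cast fact1
  have f2R : ((n:ℝ)*(n:ℝ) - (n:ℝ)) * (c2:ℝ) = ((b:ℝ)*(b:ℝ) - (b:ℝ)) * (N:ℝ) := by
    have h1 : n ≤ n*n := Nat.le_mul_of_pos_left n (by omega)
    have h2 : b ≤ b*b := Nat.le_mul_of_pos_left b (by omega)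
    have := congrArg (Nat.cast : ℕ → ℝ) fact2
    push_cast [Nat.cast_sub h1, Nat.cast_sub h2] at this
    convert this using 2 <;> ring
  have hc1R : (c1:ℝ) = (b:ℝ) * (N:ℝ) / (n:ℝ) := by
    field_simp
    linarith [f1R]
  -- scalar sum facts
  have hs1 : ∑ s ∈ P, ⟪X, ∑ i ∈ s, a i⟫ = (c1:ℝ) * W := by
    rw [← inner_sum, sumvec]
    rw [show (c1 • SA : E) = (c1:ℝ) • SA from (Nat.cast_smul_eq_nsmul ℝ c1 SA).symm,
      real_inner_smul_right]
  have hs2 : ∑ s ∈ P, ⟪SA, ∑ i ∈ s, a i⟫ = (c1:ℝ) * T := by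
    rw [← inner_sum, sumvec]
    rw [show (c1 • SA : E) = (c1:ℝ) • SA from (Nat.cast_smul_eq_nsmul ℝ c1 SA).symm,
      real_inner_smul_right, real_inner_self_eq_norm_sq]
  -- pointwise expansion
  have step1 : ∀ s ∈ P, ‖X + ((n:ℝ)⁻¹ • SA - (b:ℝ)⁻¹ • ∑ i ∈ s, a i)‖^2
      = (‖X‖^2 + 2*(n:ℝ)⁻¹*W + ((n:ℝ)⁻¹)^2*T)
        - (2*(b:ℝ)⁻¹)*⟪X, ∑ i ∈ s, a i⟫
        - (2*(b:ℝ)⁻¹*(n:ℝ)⁻¹)*⟪SA, ∑ i ∈ s, a i⟫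
        + ((b:ℝ)⁻¹)^2*‖∑ i ∈ s, a i‖^2 := by
    intro s _
    rw [norm_add_sq_real, inner_sub_right, norm_sub_sq_real,
      real_inner_smul_right, real_inner_smul_right, real_inner_smul_left,
      real_inner_smul_right, norm_smul, norm_smul, mul_pow, mul_pow]
    have h1 : ‖(n:ℝ)⁻¹‖ = (n:ℝ)⁻¹ := by
      rw [Real.norm_eq_abs, abs_of_nonneg (by positivity)]
    have h2 : ‖(b:ℝ)⁻¹‖ = (b:ℝ)⁻¹ := by
      rw [Real.norm_eq_abs, abs_of_nonneg (by positivity)]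
    rw [h1, h2, ← hT, ← hW]
    ring
  -- total sum
  have hsum : ∑ s ∈ P, ‖X + ((n:ℝ)⁻¹ • SA - (b:ℝ)⁻¹ • ∑ i ∈ s, a i)‖^2
      = (N:ℝ)*‖X‖^2 + (((c1:ℝ)*Q + (c2:ℝ)*(T-Q))/(b:ℝ)^2 - (N:ℝ)*T/(n:ℝ)^2) := by
    rw [Finset.sum_congr rfl step1]
    rw [Finset.sum_add_distrib, Finset.sum_sub_distrib, Finset.sum_sub_distrib,
      ← Finset.mul_sum, ← Finset.mul_sum, ← Finset.mul_sum,
      Finset.sum_const, hs1, hs2, sumsq, ← hN]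
    rw [hc1R]
    field_simp
    have hnn : ((n:ℝ)⁻¹)^2 * (n:ℝ)^2 = 1 := by field_simp
    linear_combination ((b:ℝ)^2*(N:ℝ)*T + 2*(b:ℝ)^2*(n:ℝ)*W*(N:ℝ) + (b:ℝ)^2*(n:ℝ)^2*‖X‖^2*(N:ℝ)) * hnn
  rw [hsum, mul_add]
  have hNN : (N:ℝ)⁻¹ * ((N:ℝ)*‖X‖^2) = ‖X‖^2 := by field_simp
  rw [hNN]
  refine add_le_add_right ?_ _
  have := arith_var (n:ℝ) (b:ℝ) (N:ℝ) (c1:ℝ) (c2:ℝ) Q T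
    (by exact_mod_cast hn) (by exact_mod_cast hb) (by exact_mod_cast hbn)
    (by positivity) f1R f2R hQ0 hT0
  linarith [this]
end core

section keystep
open Finset
lemma key_step {E : Type*} [NormedAddCommGroup E] [InnerProductSpace ℝ E] {n b : ℕ}
    (hn : 2 ≤ n) (hb : 1 ≤ b) (hbn : b ≤ n)
    (g : Fin n → E → E) (G : E → E) (hG : ∀ w, G w = (n:ℝ)⁻¹ • ∑ i, g i w)
    (L η : ℝ) (hη : 0 < η)
    (hsmooth : ∀ i (w w' : E), ‖g i w - g i w'‖ ≤ L * ‖w - w'‖)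
    (w v : E) :
    ((powersetCard b (univ : Finset (Fin n))).card : ℝ)⁻¹ *
      ∑ s ∈ powersetCard b (univ : Finset (Fin n)),
        ‖G (w - η • v) - ((b:ℝ)⁻¹ • ∑ i ∈ s, (g i (w - η • v) - g i w) + v)‖^2
    ≤ ‖G w - v‖^2
      + ((n:ℝ) - b)/((b:ℝ)*((n:ℝ)-1)) * (L^2 * η^2 * ‖v‖^2) := by
  have hb0 : (0:ℝ) < b := by exact_mod_cast hb
  have hn1 : (0:ℝ) < (n:ℝ) - 1 := by
    have : (2:ℝ) ≤ n := by exact_mod_cast hn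
    linarith
  have hbnR : (b:ℝ) ≤ n := by exact_mod_cast hbn
  have hα0 : 0 ≤ ((n:ℝ) - b)/((b:ℝ)*((n:ℝ)-1)) :=
    div_nonneg (by linarith) (by positivity)
  have hGa : (n:ℝ)⁻¹ • ∑ i, (g i (w - η • v) - g i w) = G (w - η • v) - G w := by
    rw [hG, hG, Finset.sum_sub_distrib, smul_sub]
  have hrw : ∀ s : Finset (Fin n),
      ‖G (w - η • v) - ((b:ℝ)⁻¹ • ∑ i ∈ s, (g i (w - η • v) - g i w) + v)‖^2
        = ‖(G w - v) + ((n:ℝ)⁻¹ • ∑ i, (g i (w - η • v) - g i w)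
            - (b:ℝ)⁻¹ • ∑ i ∈ s, (g i (w - η • v) - g i w))‖^2 := by
    intro s
    congr 1
    rw [hGa]
    abel
  calc ((powersetCard b (univ : Finset (Fin n))).card : ℝ)⁻¹ *
      ∑ s ∈ powersetCard b (univ : Finset (Fin n)),
        ‖G (w - η • v) - ((b:ℝ)⁻¹ • ∑ i ∈ s, (g i (w - η • v) - g i w) + v)‖^2
      = ((powersetCard b (univ : Finset (Fin n))).card : ℝ)⁻¹ *
        ∑ s ∈ powersetCard b (univ : Finset (Fin n)),
          ‖(G w - v) + ((n:ℝ)⁻¹ • ∑ i, (g i (w - η • v) - g i w)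
            - (b:ℝ)⁻¹ • ∑ i ∈ s, (g i (w - η • v) - g i w))‖^2 := by
        rw [Finset.sum_congr rfl fun s _ => hrw s]
    _ ≤ ‖G w - v‖^2 + ((n:ℝ) - b)/((b:ℝ)*((n:ℝ)-1))
          * ((n:ℝ)⁻¹ * ∑ i, ‖g i (w - η • v) - g i w‖^2) :=
        batch_avg_bound hn hb hbn (G w - v) _
    _ ≤ _ := by
        refine add_le_add_right (mul_le_mul_of_nonneg_left ?_ hα0) _
        have hwv : ‖(w - η • v) - w‖ = η * ‖v‖ := by
          rw [show w - η • v - w = -(η • v) by abel, norm_neg, norm_smul,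
            Real.norm_eq_abs, abs_of_pos hη]
        have hai : ∀ i, ‖g i (w - η • v) - g i w‖^2 ≤ L^2 * η^2 * ‖v‖^2 := by
          intro i
          have h1 : ‖g i (w - η • v) - g i w‖ ≤ L * (η * ‖v‖) := by
            rw [← hwv]; exact hsmooth i _ w
          calc ‖g i (w - η • v) - g i w‖^2 ≤ (L * (η * ‖v‖))^2 :=
              pow_le_pow_left₀ (norm_nonneg _) h1 2
            _ = L^2 * η^2 * ‖v‖^2 := by ring
        have hn0' : (0:ℝ) < n := by linarith
        calc (n:ℝ)⁻¹ * ∑ i, ‖g i (w - η • v) - g i w‖^2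
            ≤ (n:ℝ)⁻¹ * ∑ _i : Fin n, L^2 * η^2 * ‖v‖^2 := by
              refine mul_le_mul_of_nonneg_left ?_ (by positivity)
              exact Finset.sum_le_sum fun i _ => hai i
          _ = L^2 * η^2 * ‖v‖^2 := by
              rw [Finset.sum_const, Finset.card_univ, Fintype.card_fin, nsmul_eq_mul]
              field_simp

end keystep

section probability
open Finset

lemma gradP {d n : ℕ} (f : Fin n → Vec d → ℝ) (hdiff : ∀ i, Differentiable ℝ (f i))
    (w : Vec d) :
    gradient (fun w => (n : ℝ)⁻¹ * ∑ i, f i w) w = (n : ℝ)⁻¹ • ∑ i, gradient (f i) w := by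
  have hds : ∀ i ∈ (univ : Finset (Fin n)), DifferentiableAt ℝ (fun w : Vec d => f i w) w :=
    fun i _ => (hdiff i).differentiableAt
  have hdsum : DifferentiableAt ℝ (fun w : Vec d => ∑ i, f i w) w :=
    DifferentiableAt.fun_sum hds
  simp only [gradient]
  rw [fderiv_const_mul hdsum, fderiv_fun_sum hds, map_smul, map_sum]

lemma expec_nonneg {Ω : Type*} [Fintype Ω] {F : Ω → ℝ} (h : ∀ ω, 0 ≤ F ω) : 0 ≤ expec F :=
  mul_nonneg (by positivity) (Finset.sum_nonneg fun ω _ => h ω)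

lemma expec_mono {Ω : Type*} [Fintype Ω] {F G : Ω → ℝ} (h : ∀ ω, F ω ≤ G ω) :
    expec F ≤ expec G :=
  mul_le_mul_of_nonneg_left (Finset.sum_le_sum fun ω _ => h ω) (by positivity)

lemma expec_add {Ω : Type*} [Fintype Ω] (F G : Ω → ℝ) :
    expec (fun ω => F ω + G ω) = expec F + expec G := by
  unfold expec; rw [Finset.sum_add_distrib, mul_add]

lemma expec_const {Ω : Type*} [Fintype Ω] [Nonempty Ω] (c : ℝ) :
    expec (fun _ : Ω => c) = c := by
  unfold expec
  rw [Finset.sum_const, Finset.card_univ, nsmul_eq_mul]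
  have : (Fintype.card Ω : ℝ) ≠ 0 := by
    have := Fintype.card_pos (α := Ω); positivity
  field_simp

lemma expec_const_mul {Ω : Type*} [Fintype Ω] (c : ℝ) (F : Ω → ℝ) :
    expec (fun ω => c * F ω) = c * expec F := by
  unfold expec; rw [← Finset.mul_sum]; ring

-- averaging over one updated coordinate
lemma expec_update {n b T : ℕ} (hcard : 0 < Fintype.card (Batch n b))
    (F : (Fin T → Batch n b) → ℝ) (k : Fin T) :
    expec F = expec (fun ω => (Fintype.card (Batch n b) : ℝ)⁻¹ *
      ∑ s : Batch n b, F (Function.update ω k s)) := by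
  have key : ∑ ω : Fin T → Batch n b, ∑ s : Batch n b, F (Function.update ω k s)
      = (Fintype.card (Batch n b) : ℝ) * ∑ ω, F ω := by
    calc ∑ ω : Fin T → Batch n b, ∑ s : Batch n b, F (Function.update ω k s)
        = ∑ p : (Fin T → Batch n b) × Batch n b, F (Function.update p.1 k p.2) :=
          (Fintype.sum_prod_type (f := fun p : (Fin T → Batch n b) × Batch n b =>
            F (Function.update p.1 k p.2))).symm
      _ = ∑ p : (Fin T → Batch n b) × Batch n b, F p.1 := by
          apply Fintype.sum_equiv
            (⟨fun p => (Function.update p.1 k p.2, p.1 k),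
              fun p => (Function.update p.1 k p.2, p.1 k),
              fun p => by simp [Function.update_idem],
              fun p => by simp [Function.update_idem]⟩ :
              ((Fin T → Batch n b) × Batch n b) ≃ _)
          intro p
          rfl
      _ = ∑ ω : Fin T → Batch n b, ∑ _s : Batch n b, F ω :=
          Fintype.sum_prod_type (f := fun p : (Fin T → Batch n b) × Batch n b => F p.1)
      _ = (Fintype.card (Batch n b) : ℝ) * ∑ ω, F ω := by
          simp [Finset.sum_const, Finset.card_univ, Finset.mul_sum, mul_comm]
  unfold expec
  simp only [← Finset.mul_sum]
  rw [key]
  have : (Fintype.card (Batch n b) : ℝ) ≠ 0 := by positivity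
  rw [inv_mul_cancel_left₀ this]

lemma card_batch (n b : ℕ) :
    Fintype.card (Batch n b) = (Finset.powersetCard b (univ : Finset (Fin n))).card :=
  Fintype.card_of_subtype (Finset.powersetCard b univ)
    (fun s => Finset.mem_powersetCard_univ)

lemma sum_batch {n b : ℕ} {M : Type*} [AddCommMonoid M] (g : Finset (Fin n) → M) :
    ∑ s : Batch n b, g s.1 = ∑ s ∈ Finset.powersetCard b (univ : Finset (Fin n)), g s :=
  (Finset.sum_subtype _ (fun s => Finset.mem_powersetCard_univ) g).symm

lemma sarahState_congr {d n : ℕ} (f : Fin n → Vec d → ℝ) (w0 : Vec d) (η : ℝ) (b : ℕ)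
    (I I' : ℕ → Finset (Fin n)) :
    ∀ t, (∀ j, 1 ≤ j → j ≤ t → I j = I' j) →
      sarahState f w0 η b I t = sarahState f w0 η b I' t
  | 0, _ => rfl
  | t+1, h => by
    have ih := sarahState_congr f w0 η b I I' t (fun j h1 h2 => h j h1 (by omega))
    simp only [sarahState]
    rw [ih, h (t+1) (by omega) le_rfl]

lemma sarahState_succ {d n : ℕ} (f : Fin n → Vec d → ℝ) (w0 : Vec d) (η : ℝ) (b : ℕ)
    (I : ℕ → Finset (Fin n)) (t : ℕ) :
    sarahState f w0 η b I (t+1)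
      = ((sarahState f w0 η b I t).1 - η • (sarahState f w0 η b I t).2,
        (b : ℝ)⁻¹ • ∑ i ∈ I (t + 1),
          (gradient (f i) ((sarahState f w0 η b I t).1 - η • (sarahState f w0 η b I t).2)
            - gradient (f i) (sarahState f w0 η b I t).1)
          + (sarahState f w0 η b I t).2) := rfl

lemma sarahState_zero {d n : ℕ} (f : Fin n → Vec d → ℝ) (w0 : Vec d) (η : ℝ) (b : ℕ)
    (I : ℕ → Finset (Fin n)) :
    sarahState f w0 η b I 0 = (w0, (n : ℝ)⁻¹ • ∑ i, gradient (f i) w0) := rfl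

end probability
/-- With the SARAH learning-rate condition
`0 < η ≤ 2/(L(√(1 + (4m/b)((n−b)/(n−1))) + 1))`, the error terms in Lemma 1 are
nonpositive: `∑_{t=0}^m E‖∇P(w_t) − v_t‖² − (1 − Lη)∑_{t=0}^m E‖v_t‖² ≤ 0`. -/
theorem sarah_in_error_terms_nonpos
    {d n : ℕ} (hn : 2 ≤ n)
    (f : Fin n → Vec d → ℝ) (L : ℝ) (hL : 0 < L)
    (hdiff : ∀ i, Differentiable ℝ (f i))
    (hsmooth : ∀ i (w w' : Vec d),
      ‖gradient (f i) w - gradient (f i) w'‖ ≤ L * ‖w - w'‖)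
    (P : Vec d → ℝ) (hP : P = fun w => (n : ℝ)⁻¹ * ∑ i, f i w)
    (w0 : Vec d) (η : ℝ) (hη : 0 < η) (b m : ℕ) (hb : 1 ≤ b) (hbn : b ≤ n)
    (hη2 : η ≤ 2 / (L * (Real.sqrt (1 + 4 * (m : ℝ) / (b : ℝ)
      * (((n : ℝ) - (b : ℝ)) / ((n : ℝ) - 1))) + 1))) :
    ∑ t ∈ Finset.range (m + 1),
        expec (fun ω : Fin (m + 1) → Batch n b =>
          ‖gradient P ((sarahState f w0 η b (pad ω) t).1)
            - (sarahState f w0 η b (pad ω) t).2‖ ^ 2)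
      - (1 - L * η) * ∑ t ∈ Finset.range (m + 1),
          expec (fun ω : Fin (m + 1) → Batch n b =>
            ‖(sarahState f w0 η b (pad ω) t).2‖ ^ 2) ≤ 0 := by
  classical
  have hgradP : ∀ w : Vec d, gradient P w = (n:ℝ)⁻¹ • ∑ i, gradient (f i) w := by
    subst hP; exact gradP f hdiff
  simp only [hgradP]
  -- constants
  have hb0 : (0:ℝ) < b := by exact_mod_cast hb
  have hn1 : (0:ℝ) < (n:ℝ) - 1 := by
    have : (2:ℝ) ≤ n := by exact_mod_cast hn
    linarith
  have hbnR : (b:ℝ) ≤ n := by exact_mod_cast hbn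
  have hα0 : 0 ≤ ((n:ℝ) - (b:ℝ))/((b:ℝ)*((n:ℝ)-1)) :=
    div_nonneg (by linarith) (by positivity)
  have hcardB : 0 < Fintype.card (Batch n b) := by
    rw [card_batch, Finset.card_powersetCard, Finset.card_univ, Fintype.card_fin]
    exact Nat.choose_pos hbn
  set A : ℕ → ℝ := fun t => expec (fun ω : Fin (m + 1) → Batch n b =>
    ‖(n:ℝ)⁻¹ • ∑ i, gradient (f i) ((sarahState f w0 η b (pad ω) t).1)
      - (sarahState f w0 η b (pad ω) t).2‖ ^ 2) with hA
  set B : ℕ → ℝ := fun t => expec (fun ω : Fin (m + 1) → Batch n b =>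
    ‖(sarahState f w0 η b (pad ω) t).2‖ ^ 2) with hB
  -- one-step key bound
  have key : ∀ w v : Vec d,
      (Fintype.card (Batch n b) : ℝ)⁻¹ * ∑ s : Batch n b,
        ‖(n:ℝ)⁻¹ • ∑ i, gradient (f i) (w - η • v)
          - ((b:ℝ)⁻¹ • ∑ i ∈ s.1, (gradient (f i) (w - η • v) - gradient (f i) w) + v)‖^2
      ≤ ‖(n:ℝ)⁻¹ • ∑ i, gradient (f i) w - v‖^2
        + ((n:ℝ) - (b:ℝ))/((b:ℝ)*((n:ℝ)-1)) * (L^2 * η^2 * ‖v‖^2) := by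
    intro w v
    rw [card_batch, sum_batch (fun s => ‖(n:ℝ)⁻¹ • ∑ i, gradient (f i) (w - η • v)
      - ((b:ℝ)⁻¹ • ∑ i ∈ s, (gradient (f i) (w - η • v) - gradient (f i) w) + v)‖^2)]
    exact key_step hn hb hbn (fun i => gradient (f i))
      (fun w => (n:ℝ)⁻¹ • ∑ i, gradient (f i) w) (fun w => rfl) L η hη hsmooth w v
  -- the recursion
  have hrec : ∀ t, t < m →
      A (t+1) ≤ A t + (((n:ℝ) - (b:ℝ))/((b:ℝ)*((n:ℝ)-1)) * (L^2 * η^2)) * B t := by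
    intro t ht
    set k : Fin (m+1) := ⟨t+1, by omega⟩ with hk
    have hupd : ∀ (ω : Fin (m+1) → Batch n b) (s : Batch n b),
        sarahState f w0 η b (pad (Function.update ω k s)) t
          = sarahState f w0 η b (pad ω) t := by
      intro ω s
      apply sarahState_congr
      intro j h1 h2
      have hj : j < m + 1 := by omega
      unfold pad
      rw [dif_pos hj, dif_pos hj, Function.update_of_ne]
      intro hcontra
      rw [hk] at hcontra
      have : j = t + 1 := by
        have := congrArg Fin.val hcontra
        simpa using this
      omega
    have hpadk : ∀ (ω : Fin (m+1) → Batch n b) (s : Batch n b),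
        pad (Function.update ω k s) (t+1) = s.1 := by
      intro ω s
      unfold pad
      rw [dif_pos (show t+1 < m+1 by omega)]
      congr 1
      rw [show (⟨t+1, show t+1 < m+1 by omega⟩ : Fin (m+1)) = k from rfl,
        Function.update_self]
    calc A (t+1)
        = expec (fun ω : Fin (m+1) → Batch n b =>
            (Fintype.card (Batch n b) : ℝ)⁻¹ * ∑ s : Batch n b,
              ‖(n:ℝ)⁻¹ • ∑ i, gradient (f i)
                  ((sarahState f w0 η b (pad (Function.update ω k s)) (t+1)).1)
                - (sarahState f w0 η b (pad (Function.update ω k s)) (t+1)).2‖ ^ 2) := by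
          simp only [hA]
          exact expec_update hcardB _ k
      _ ≤ expec (fun ω : Fin (m+1) → Batch n b =>
            ‖(n:ℝ)⁻¹ • ∑ i, gradient (f i) ((sarahState f w0 η b (pad ω) t).1)
              - (sarahState f w0 η b (pad ω) t).2‖ ^ 2
            + (((n:ℝ) - (b:ℝ))/((b:ℝ)*((n:ℝ)-1)) * (L^2 * η^2))
              * ‖(sarahState f w0 η b (pad ω) t).2‖ ^ 2) := by
          apply expec_mono
          intro ω
          have hterm : ∀ s : Batch n b,
              ‖(n:ℝ)⁻¹ • ∑ i, gradient (f i)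
                  ((sarahState f w0 η b (pad (Function.update ω k s)) (t+1)).1)
                - (sarahState f w0 η b (pad (Function.update ω k s)) (t+1)).2‖ ^ 2
              = ‖(n:ℝ)⁻¹ • ∑ i, gradient (f i)
                    ((sarahState f w0 η b (pad ω) t).1
                      - η • (sarahState f w0 η b (pad ω) t).2)
                  - ((b:ℝ)⁻¹ • ∑ i ∈ s.1,
                      (gradient (f i) ((sarahState f w0 η b (pad ω) t).1
                        - η • (sarahState f w0 η b (pad ω) t).2)
                      - gradient (f i) ((sarahState f w0 η b (pad ω) t).1))
                    + (sarahState f w0 η b (pad ω) t).2)‖ ^ 2 := by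
            intro s
            rw [sarahState_succ, hupd ω s, hpadk ω s]
          rw [Finset.sum_congr rfl (fun s _ => hterm s)]
          calc _ ≤ _ := key (sarahState f w0 η b (pad ω) t).1
                          (sarahState f w0 η b (pad ω) t).2
            _ = _ := by ring
      _ = A t + (((n:ℝ) - (b:ℝ))/((b:ℝ)*((n:ℝ)-1)) * (L^2 * η^2)) * B t := by
          rw [expec_add]
          simp only [hA, hB]
          rw [expec_const_mul]
  -- base case
  have hA0 : A 0 = 0 := by
    simp only [hA]
    have hz : ∀ ω : Fin (m+1) → Batch n b,
        ‖(n:ℝ)⁻¹ • ∑ i, gradient (f i) ((sarahState f w0 η b (pad ω) 0).1)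
          - (sarahState f w0 η b (pad ω) 0).2‖ ^ 2 = 0 := by
      intro ω
      rw [sarahState_zero]
      simp
    unfold expec
    rw [Finset.sum_congr rfl (fun ω _ => hz ω), Finset.sum_const_zero, mul_zero]
  -- induction
  have hB0 : ∀ t, 0 ≤ B t := fun t => expec_nonneg (fun ω => sq_nonneg _)
  have hAbound : ∀ t, t ≤ m →
      A t ≤ (((n:ℝ) - (b:ℝ))/((b:ℝ)*((n:ℝ)-1)) * (L^2 * η^2)) * ∑ j ∈ Finset.range t, B j := by
    intro t
    induction t with
    | zero => intro _; rw [hA0]; simp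
    | succ t ih =>
      intro ht
      have h1 := hrec t (by omega)
      have h2 := ih (by omega)
      rw [Finset.sum_range_succ, mul_add]
      linarith
  -- learning rate condition
  have hx : 0 < L * η := mul_pos hL hη
  have hK0 : 0 ≤ 4 * (m : ℝ) / (b : ℝ) * (((n : ℝ) - (b : ℝ)) / ((n : ℝ) - 1)) := by
    apply mul_nonneg
    · positivity
    · apply div_nonneg (by linarith) (by linarith)
  have hcond : (L * η) * (Real.sqrt
      (1 + 4 * (m : ℝ) / (b : ℝ) * (((n : ℝ) - (b : ℝ)) / ((n : ℝ) - 1))) + 1) ≤ 2 := by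
    have hs0 := Real.sqrt_nonneg
      (1 + 4 * (m : ℝ) / (b : ℝ) * (((n : ℝ) - (b : ℝ)) / ((n : ℝ) - 1)))
    have hD : 0 < L * (Real.sqrt
        (1 + 4 * (m : ℝ) / (b : ℝ) * (((n : ℝ) - (b : ℝ)) / ((n : ℝ) - 1))) + 1) := by
      have h1 : (0:ℝ) < Real.sqrt
          (1 + 4 * (m : ℝ) / (b : ℝ) * (((n : ℝ) - (b : ℝ)) / ((n : ℝ) - 1))) + 1 := by
        linarith
      positivity
    rw [le_div_iff₀ hD] at hη2
    nlinarith [hη2]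
  have heta := arith_eta _ (L * η) hK0 hx hcond
  have hκm : (((n:ℝ) - (b:ℝ))/((b:ℝ)*((n:ℝ)-1)) * (L^2 * η^2)) * (m:ℝ) ≤ 1 - L * η := by
    have hK4 : (4 * (m : ℝ) / (b : ℝ) * (((n : ℝ) - (b : ℝ)) / ((n : ℝ) - 1))) / 4
        = (m:ℝ) * (((n:ℝ) - (b:ℝ))/((b:ℝ)*((n:ℝ)-1))) := by
      field_simp
    have he : (4 * (m : ℝ) / (b : ℝ) * (((n : ℝ) - (b : ℝ)) / ((n : ℝ) - 1))) / 4 * (L*η)^2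
        = (((n:ℝ) - (b:ℝ))/((b:ℝ)*((n:ℝ)-1)) * (L^2 * η^2)) * (m:ℝ) := by
      rw [hK4]; ring
    linarith [heta]
  have hLη1 : 0 ≤ 1 - L * η := arith_le_one _ _ hK0 hx hcond
  -- assemble
  have hSB0 : 0 ≤ ∑ t ∈ Finset.range (m + 1), B t := Finset.sum_nonneg fun t _ => hB0 t
  have hκ0 : 0 ≤ ((n:ℝ) - (b:ℝ))/((b:ℝ)*((n:ℝ)-1)) * (L^2 * η^2) := by positivity
  have hsumA : ∑ t ∈ Finset.range (m + 1), A t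
      ≤ (((n:ℝ) - (b:ℝ))/((b:ℝ)*((n:ℝ)-1)) * (L^2 * η^2))
        * ((m:ℝ) * ∑ t ∈ Finset.range (m + 1), B t) := by
    calc ∑ t ∈ Finset.range (m + 1), A t
        ≤ ∑ t ∈ Finset.range (m + 1),
            (((n:ℝ) - (b:ℝ))/((b:ℝ)*((n:ℝ)-1)) * (L^2 * η^2)) * ∑ j ∈ Finset.range t, B j := by
          apply Finset.sum_le_sum
          intro t ht
          exact hAbound t (Nat.lt_succ_iff.mp (Finset.mem_range.mp ht))
      _ = (((n:ℝ) - (b:ℝ))/((b:ℝ)*((n:ℝ)-1)) * (L^2 * η^2))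
          * ∑ t ∈ Finset.range (m + 1), ∑ j ∈ Finset.range t, B j := by
          rw [Finset.mul_sum]
      _ ≤ _ := by
          refine mul_le_mul_of_nonneg_left ?_ hκ0
          have hinner : ∀ t, t ≤ m →
              ∑ j ∈ Finset.range t, B j ≤ ∑ t ∈ Finset.range (m + 1), B t := by
            intro t ht
            apply Finset.sum_le_sum_of_subset_of_nonneg
            · exact Finset.range_subset_range.mpr (by omega)
            · intro j _ _; exact hB0 j
          calc ∑ t ∈ Finset.range (m + 1), ∑ j ∈ Finset.range t, B j
              = (∑ t ∈ Finset.range m, ∑ j ∈ Finset.range (t+1), B j)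
                + ∑ j ∈ Finset.range 0, B j := Finset.sum_range_succ' _ m
            _ ≤ (∑ _t ∈ Finset.range m, ∑ t ∈ Finset.range (m + 1), B t) + 0 := by
                refine add_le_add (Finset.sum_le_sum fun t ht => ?_) (by simp)
                exact hinner (t+1) (by
                  have := Finset.mem_range.mp ht; omega)
            _ = (m:ℝ) * ∑ t ∈ Finset.range (m + 1), B t := by
                rw [Finset.sum_const, nsmul_eq_mul, Finset.card_range, add_zero]
  have final : ∑ t ∈ Finset.range (m + 1), A t
      - (1 - L * η) * ∑ t ∈ Finset.range (m + 1), B t ≤ 0 := by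
    have h2 : (((n:ℝ) - (b:ℝ))/((b:ℝ)*((n:ℝ)-1)) * (L^2 * η^2))
        * ((m:ℝ) * ∑ t ∈ Finset.range (m + 1), B t)
        ≤ (1 - L * η) * ∑ t ∈ Finset.range (m + 1), B t := by
      calc (((n:ℝ) - (b:ℝ))/((b:ℝ)*((n:ℝ)-1)) * (L^2 * η^2))
          * ((m:ℝ) * ∑ t ∈ Finset.range (m + 1), B t)
          = ((((n:ℝ) - (b:ℝ))/((b:ℝ)*((n:ℝ)-1)) * (L^2 * η^2)) * (m:ℝ))
            * ∑ t ∈ Finset.range (m + 1), B t := by ring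
        _ ≤ (1 - L * η) * ∑ t ∈ Finset.range (m + 1), B t :=
            mul_le_mul_of_nonneg_right hκm hSB0
    linarith [hsumA]
  exact final
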